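/- Scalar version of the key Hardy-type consequence: if s ≥ c₁ > 0, p ∈ ℝ, t ≥ 0 satisfy t/(s+c₂) + p − c₂ ≥ 0 for some c₂ > 0, then t/s + p ≥ δ(1 + t/s²) for every 0 < δ ≤ c₁c₂/(c₁+c₂). -/
import Mathlib

/-- Scalar version of the Hardy-type consequence: if `s ≥ c₁ > 0`, `t ≥ 0`,
`t/(s+c₂) + p − c₂ ≥ 0` for some `c₂ > 0`, then `t/s + p ≥ δ(1 + t/s²)` for every
`0 < δ ≤ c₁c₂/(c₁+c₂)`. -/
theorem stmt17 (c₁ c₂ s p t δ : ℝ) (hc₁ : 0 < c₁) (hs : c₁ ≤ s) (ht : 0 ≤ t)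
    (hc₂ : 0 < c₂) (hq : 0 ≤ t / (s + c₂) + p - c₂)
    (hδ : 0 < δ) (hδle : δ ≤ c₁ * c₂ / (c₁ + c₂)) :
    δ * (1 + t / s ^ 2) ≤ t / s + p := by
  have hs0 : 0 < s := lt_of_lt_of_le hc₁ hs
  have hsc : 0 < s + c₂ := by linarith
  have hcc : 0 < c₁ + c₂ := by linarith
  have hq' : 0 ≤ t + (p - c₂) * (s + c₂) := by
    have := mul_nonneg hq hsc.le
    field_simp at this ⊢
    nlinarith [this]
  have hδle' : δ * (c₁ + c₂) ≤ c₁ * c₂ := by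
    exact (le_div_iff₀ hcc).mp hδle
  rw [div_add' _ _ _ hs0.ne']
  have h1 : 0 ≤ c₂ * s - δ * (s + c₂) := by nlinarith [mul_nonneg hc₂.le (mul_nonneg hc₂.le (sub_nonneg.mpr hs))]
  have h3 : δ ≤ c₂ := by nlinarith
  have key : δ * (s ^ 2 + t) ≤ t * s + p * s ^ 2 := by
    rw [← sub_nonneg]
    have hexp : (t * s + p * s ^ 2 - δ * (s ^ 2 + t)) * (s + c₂) =
        t * (c₂ * s - δ * (s + c₂)) + (t + (p - c₂) * (s + c₂)) * s ^ 2
        + (c₂ - δ) * (s ^ 2 * (s + c₂)) := by ring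
    have := add_nonneg (add_nonneg (mul_nonneg ht h1)
      (mul_nonneg hq' (pow_pos hs0 2).le))
      (mul_nonneg (sub_nonneg.mpr h3) (mul_nonneg (pow_pos hs0 2).le hsc.le))
    rw [← hexp] at this
    exact nonneg_of_mul_nonneg_right (by linarith [mul_comm (t * s + p * s ^ 2 - δ * (s ^ 2 + t)) (s + c₂)]) hsc
  have h2 : δ * (1 + t / s ^ 2) = δ * (s ^ 2 + t) / s ^ 2 := by field_simp
  rw [h2, div_le_div_iff₀ (pow_pos hs0 2) hs0]
  nlinarith [mul_le_mul_of_nonneg_right key hs0.le]
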